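/- Under the stated setup, the determinant of TᵀR⁻¹T factors as det(TᵀR⁻¹T) = det(HᵀR⁻¹H) · det(WᵀQᴴW). -/

import Mathlib

open Matrix

/-- Determinant factorization: det(TᵀR⁻¹T) = det(HᵀR⁻¹H)·det(WᵀQᴴW) where
T = [H, W] and Qᴴ = R⁻¹ − R⁻¹H(HᵀR⁻¹H)⁻¹HᵀR⁻¹. -/
theorem det_Tt_Rinv_T_factorization
    (n q p : ℕ) (hn : 0 < n) (hq : 0 < q) (hp : 0 < p)
    (R : Matrix (Fin n) (Fin n) ℝ) (hR : R.PosDef)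
    (H : Matrix (Fin n) (Fin q) ℝ)
    (hA : IsUnit (Hᵀ * R⁻¹ * H))
    (W : Matrix (Fin n) (Fin p) ℝ)
    (T : Matrix (Fin n) (Fin q ⊕ Fin p) ℝ)
    (hT : T = Matrix.fromCols H W)
    (QH : Matrix (Fin n) (Fin n) ℝ)
    (hQH : QH = R⁻¹ - R⁻¹ * H * (Hᵀ * R⁻¹ * H)⁻¹ * Hᵀ * R⁻¹) :
    (Tᵀ * R⁻¹ * T).det = (Hᵀ * R⁻¹ * H).det * (Wᵀ * QH * W).det := by
  have hblock : Tᵀ * R⁻¹ * T =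
      Matrix.fromBlocks (Hᵀ * R⁻¹ * H) (Hᵀ * R⁻¹ * W) (Wᵀ * R⁻¹ * H) (Wᵀ * R⁻¹ * W) := by
    subst hT
    rw [transpose_fromCols, fromRows_mul, fromRows_mul_fromCols]
  have : Invertible (Hᵀ * R⁻¹ * H) := hA.invertible
  rw [hblock, det_fromBlocks₁₁]
  congr 2
  rw [hQH, invOf_eq_nonsing_inv]
  simp [Matrix.mul_sub, Matrix.sub_mul, Matrix.mul_assoc]
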